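/- For the full subword order on {a,b}* (Björner's theorem, special case recovered as d → ∞): for u ≤ w, the number of normal embeddings (w choose u)_n satisfies the recursion enabling μ: the alternating sum ∑_{u ≤ v ≤ w} (−1)^{|v|} (w choose v)_n = 0 whenever u < w, where (w choose v)_n counts embeddings of v in w containing the repetition set R(w). -/

import Mathlib

open List

/-- Words over the alphabet `{a,b}`: `true` encodes `a`, `false` encodes `b`. -/
abbrev Word := List Bool

/-- `s` is an embedding of `u` in `w`: listing the elements of `s` in increasing
order picks out the letters of `u` inside `w`. -/
def IsEmb (u w : Word) (s : Finset ℕ) : Prop :=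
  (s.sort (· ≤ ·)).map (fun i => w[i]?) = u.map some

/-- The repetition set `R(w) = {j ≥ 1 : w_j = w_{j-1}}` (0-based positions). -/
def RepSet (w : Word) : Finset ℕ :=
  (Finset.Ico 1 w.length).filter (fun j => w[j]? = w[j-1]?)

/-- `(w choose v)_n`: number of normal embeddings of `v` in `w`. -/
noncomputable def nCount (v w : Word) : ℕ :=
  Nat.card {s : Finset ℕ // IsEmb v w s ∧ RepSet w ⊆ s}

instance {u w : Word} {s : Finset ℕ} : Decidable (IsEmb u w s) := by
  unfold IsEmb; infer_instance

def wrd (w : Word) (s : Finset ℕ) : Word := (s.sort (· ≤ ·)).filterMap (fun i => w[i]?)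

theorem isEmb_subset {v w : Word} {s : Finset ℕ} (h : IsEmb v w s) :
    s ⊆ Finset.range w.length := by
  intro i hi
  have hmem : w[i]? ∈ (s.sort (· ≤ ·)).map (fun i => w[i]?) :=
    List.mem_map_of_mem ((Finset.mem_sort _).mpr hi)
  rw [h] at hmem
  obtain ⟨x, _, hx⟩ := List.mem_map.mp hmem
  obtain ⟨hlt, _⟩ := List.getElem?_eq_some_iff.mp hx.symm
  exact Finset.mem_range.mpr hlt

theorem map_eq_map_some (w : Word) : ∀ l : List ℕ, (∀ i ∈ l, i < w.length) →
    l.map (fun i => w[i]?) = (l.filterMap (fun i => w[i]?)).map some := by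
  intro l
  induction l with
  | nil => simp
  | cons a l ih =>
    intro h
    have ha : a < w.length := h a (by simp)
    rw [List.map_cons, List.filterMap_cons, List.getElem?_eq_getElem ha]
    simp only [List.map_cons]
    rw [ih (fun i hi => h i (by simp [hi]))]

theorem map_some_wrd {w : Word} {s : Finset ℕ} (hs : s ⊆ Finset.range w.length) :
    (s.sort (· ≤ ·)).map (fun i => w[i]?) = (wrd w s).map some := by
  apply map_eq_map_some
  intro i hi
  exact Finset.mem_range.mp (hs ((Finset.mem_sort _).mp hi))

theorem isEmb_iff {v w : Word} {s : Finset ℕ} (hs : s ⊆ Finset.range w.length) :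
    IsEmb v w s ↔ wrd w s = v := by
  unfold IsEmb
  rw [map_some_wrd hs]
  constructor
  · intro h; exact List.map_injective_iff.mpr (fun _ _ => Option.some.inj) h
  · intro h; rw [h]

theorem isEmb_card {v w : Word} {s : Finset ℕ} (h : IsEmb v w s) : s.card = v.length := by
  have := congrArg List.length h
  simpa using this

theorem nCount_eq_card (v w : Word) :
    nCount v w = ((Finset.range w.length).powerset.filter
      (fun s => IsEmb v w s ∧ RepSet w ⊆ s)).card := by
  classical
  rw [nCount]
  have hset : {s : Finset ℕ | IsEmb v w s ∧ RepSet w ⊆ s} =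
      ↑((Finset.range w.length).powerset.filter
        (fun s => IsEmb v w s ∧ RepSet w ⊆ s)) := by
    ext s
    simp only [Set.mem_setOf_eq, Finset.coe_filter, Finset.mem_powerset, Set.mem_setOf_eq]
    exact ⟨fun h => ⟨isEmb_subset h.1, h⟩, fun h => h.2⟩
  have : Nat.card {s : Finset ℕ // IsEmb v w s ∧ RepSet w ⊆ s}
      = Nat.card {s : Finset ℕ | IsEmb v w s ∧ RepSet w ⊆ s} := rfl
  rw [this, hset, Nat.card_coe_set_eq, Set.ncard_coe_finset]


theorem sortEq {l : List ℕ} {s : Finset ℕ} (hl : l.Pairwise (· < ·)) (hs : l.toFinset = s) :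
    s.sort (· ≤ ·) = l := by
  subst hs
  have hnd : l.Nodup := hl.imp ne_of_lt
  have hperm : Finset.sort l.toFinset (· ≤ ·) ~ l := by
    refine List.perm_of_nodup_nodup_toFinset_eq (Finset.sort_nodup _ _) hnd ?_
    exact Finset.sort_toFinset _ (· ≤ ·)
  exact List.Perm.eq_of_pairwise' (Finset.pairwise_sort _ _) (hl.imp le_of_lt) hperm

theorem seg (w : Word) : ∀ (k a : ℕ), a + k ≤ w.length →
    (List.range' a k).filterMap (fun i => w[i]?) = (w.drop a).take k := by
  intro k
  induction k with
  | zero => simp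
  | succ k ih =>
    intro a ha
    have haw : a < w.length := by omega
    rw [List.range'_succ, List.filterMap_cons, List.getElem?_eq_getElem haw]
    rw [ih (a+1) (by omega)]
    conv_rhs => rw [List.drop_eq_getElem_cons haw]
    rfl

theorem wrd_mono {w : Word} {s t : Finset ℕ} (h : s ⊆ t) : wrd w s <+ wrd w t := by
  apply List.Sublist.filterMap
  have := List.sublist_of_subperm_of_pairwise ?_ (s.sortedLT_sort.pairwise) (t.sortedLT_sort.pairwise)
  · exact this
  · refine List.subperm_of_subset (s.sort_nodup _) ?_
    intro x hx
    rw [Finset.mem_sort] at hx ⊢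
    exact h hx

theorem wrd_range (w : Word) : wrd w (Finset.range w.length) = w := by
  unfold wrd
  rw [Finset.sort_range, List.range_eq_range']
  rw [show (List.range' 0 w.length).filterMap (fun i => w[i]?) = (w.drop 0).take w.length
    from seg w w.length 0 (by omega)]
  simp

theorem wrd_sublist {w : Word} {s : Finset ℕ} (hs : s ⊆ Finset.range w.length) :
    wrd w s <+ w := by
  have := wrd_mono (w := w) hs
  rwa [wrd_range] at this

open Classical in
theorem sum_reindex (u w : Word) :
    ∑ v ∈ w.sublists.toFinset.filter (fun v => u <+ v),
      (-1 : ℤ) ^ v.length * (nCount v w : ℤ)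
    = ∑ s ∈ (Finset.range w.length).powerset.filter
        (fun s => RepSet w ⊆ s ∧ u <+ wrd w s), (-1 : ℤ) ^ s.card := by
  classical
  set V := w.sublists.toFinset.filter (fun v => u <+ v) with hV
  set E : Word → Finset (Finset ℕ) := fun v => (Finset.range w.length).powerset.filter
      (fun s => IsEmb v w s ∧ RepSet w ⊆ s) with hE
  have step1 : ∀ v ∈ V, (-1 : ℤ) ^ v.length * (nCount v w : ℤ)
      = ∑ s ∈ E v, (-1 : ℤ) ^ s.card := by
    intro v hv
    rw [nCount_eq_card]
    rw [Finset.sum_congr rfl (fun s hs => by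
      rw [isEmb_card (Finset.mem_filter.mp hs).2.1] :
        ∀ s ∈ E v, ((-1:ℤ)^s.card) = (-1:ℤ)^v.length)]
    rw [Finset.sum_const, nsmul_eq_mul, mul_comm]
  rw [Finset.sum_congr rfl step1]
  rw [← Finset.sum_biUnion]
  · congr 1
    ext s
    simp only [Finset.mem_biUnion, hE, Finset.mem_filter, Finset.mem_powerset]
    constructor
    · rintro ⟨v, hv, hsub, hemb, hrep⟩
      refine ⟨hsub, hrep, ?_⟩
      rw [hV, Finset.mem_filter] at hv
      rw [(isEmb_iff hsub).mp hemb]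
      exact hv.2
    · rintro ⟨hsub, hrep, hu⟩
      refine ⟨wrd w s, ?_, hsub, (isEmb_iff hsub).mpr rfl, hrep⟩
      rw [hV, Finset.mem_filter, List.mem_toFinset, List.mem_sublists]
      exact ⟨wrd_sublist hsub, hu⟩
  · intro v₁ h₁ v₂ h₂ hne
    simp only [Finset.disjoint_left]
    intro s hs₁ hs₂
    rw [hE, Finset.mem_filter, Finset.mem_powerset] at hs₁ hs₂
    exact hne (((isEmb_iff hs₁.1).mp hs₁.2.1).symm.trans ((isEmb_iff hs₂.1).mp hs₂.2.1))

def tailW (w : Word) (s : Finset ℕ) (p : ℕ) : Word :=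
  ((s.filter (fun i => p < i)).sort (· ≤ ·)).filterMap (fun i => w[i]?)

theorem wrd_split {w : Word} {s : Finset ℕ} {p : ℕ} (t : Finset ℕ) (l : List ℕ)
    (hl : l.Pairwise (· < ·)) (hbound : ∀ x ∈ l, x ≤ p)
    (hte : l.toFinset ∪ (s.filter (fun i => p < i)) = t) :
    wrd w t = l.filterMap (fun i => w[i]?) ++ tailW w s p := by
  have hsort : t.sort (· ≤ ·) = l ++ (s.filter (fun i => p < i)).sort (· ≤ ·) := by
    apply sortEq
    · rw [List.pairwise_append]
      refine ⟨hl, (Finset.sortedLT_sort _).pairwise, ?_⟩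
      intro x hx y hy
      have h1 : p < y := (Finset.mem_filter.mp ((Finset.mem_sort _).mp hy)).2
      have h2 := hbound x hx
      omega
    · rw [List.toFinset_append, Finset.sort_toFinset]
      exact hte
  rw [wrd, hsort, List.filterMap_append]
  rfl

theorem sorted_lt_range'' (a k : ℕ) : (List.range' a k).Pairwise (· < ·) := by
  exact List.pairwise_lt_range'

theorem wrdD1 {w : Word} {s : Finset ℕ} {p : ℕ} (hp : p ≤ w.length) (hps : p ∉ s)
    (hlow : ∀ i < p, i ∈ s) : wrd w s = w.take p ++ tailW w s p := by
  have hs := wrd_split (w:=w) (s:=s) (p:=p) s (List.range p) List.pairwise_lt_range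
    (fun x hx => by rw [List.mem_range] at hx; omega) ?_
  · rw [hs, List.range_eq_range', seg w p 0 (by omega), List.drop_zero]
  · ext i
    simp only [Finset.mem_union, List.mem_toFinset, List.mem_range, Finset.mem_filter]
    constructor
    · rintro (h | ⟨h, _⟩)
      · exact hlow i h
      · exact h
    · intro hi
      rcases lt_trichotomy i p with h | h | h
      · exact Or.inl h
      · exact absurd (h ▸ hi) hps
      · exact Or.inr ⟨hi, h⟩

theorem wrdD2 {w : Word} {s : Finset ℕ} {p : ℕ} (hp : p < w.length) (hps : p ∉ s)
    (hlow : ∀ i < p, i ∈ s) :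
    wrd w (insert p s) = w.take p ++ w[p] :: tailW w s p := by
  have hs := wrd_split (w:=w) (s:=s) (p:=p) (insert p s) (List.range (p+1))
    List.pairwise_lt_range (fun x hx => by rw [List.mem_range] at hx; omega) ?_
  · rw [hs, List.range_eq_range', seg w (p+1) 0 (by omega), List.drop_zero]
    rw [List.take_succ, List.getElem?_eq_getElem hp, Option.toList_some, List.append_assoc,
      List.singleton_append]
  · ext i
    simp only [Finset.mem_union, List.mem_toFinset, List.mem_range, Finset.mem_filter,
      Finset.mem_insert]
    constructor
    · rintro (h | ⟨h, _⟩)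
      · rcases Nat.lt_or_ge i p with h' | h'
        · exact Or.inr (hlow i h')
        · exact Or.inl (by omega)
      · exact Or.inr h
    · rintro (rfl | hi)
      · exact Or.inl (by omega)
      · rcases lt_trichotomy i p with h | h | h
        · exact Or.inl (by omega)
        · exact absurd (h ▸ hi) hps
        · exact Or.inr ⟨hi, h⟩

theorem eraseIdx_take {w : Word} {p q : ℕ} (hq : q < p) (hp : p ≤ w.length) :
    (w.take p).eraseIdx q = w.take q ++ (w.drop (q+1)).take (p-(q+1)) := by
  rw [List.eraseIdx_eq_take_drop_succ, List.take_take, min_eq_left (by omega), List.drop_take]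

theorem wrdD3 {w : Word} {s : Finset ℕ} {p q : ℕ} (hp : p ≤ w.length) (hps : p ∉ s)
    (hlow : ∀ i < p, i ∈ s) (hq : q < p) :
    wrd w (s.erase q) = (w.take p).eraseIdx q ++ tailW w s p := by
  have hs := wrd_split (w:=w) (s:=s) (p:=p) (s.erase q)
    (List.range q ++ List.range' (q+1) (p-(q+1))) ?_ ?_ ?_
  · rw [hs, eraseIdx_take hq hp, List.filterMap_append, List.range_eq_range',
      seg w q 0 (by omega), List.drop_zero, seg w (p-(q+1)) (q+1) (by omega)]
  · rw [List.pairwise_append]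
    refine ⟨List.pairwise_lt_range, sorted_lt_range'' _ _, ?_⟩
    intro x hx y hy
    rw [List.mem_range] at hx
    rw [List.mem_range'_1] at hy
    omega
  · intro x hx
    rw [List.mem_append, List.mem_range, List.mem_range'_1] at hx
    omega
  · ext i
    simp only [Finset.mem_union, List.mem_toFinset, List.mem_append, List.mem_range,
      List.mem_range'_1, Finset.mem_filter, Finset.mem_erase]
    constructor
    · rintro ((h | h) | ⟨h, hpi⟩)
      · exact ⟨by omega, hlow i (by omega)⟩
      · exact ⟨by omega, hlow i (by omega)⟩
      · exact ⟨by omega, h⟩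
    · rintro ⟨hne, hi⟩
      rcases lt_trichotomy i p with h | h | h
      · left
        rcases Nat.lt_or_ge i q with h' | h'
        · exact Or.inl h'
        · exact Or.inr (by omega)
      · exact absurd (h ▸ hi) hps
      · exact Or.inr ⟨hi, h⟩

theorem wrdD4 {w : Word} {s : Finset ℕ} {p q : ℕ} (hp : p < w.length) (hps : p ∉ s)
    (hlow : ∀ i < p, i ∈ s) (hq : q < p) :
    wrd w ((insert p s).erase q) = (w.take p).eraseIdx q ++ w[p] :: tailW w s p := by
  have hs := wrd_split (w:=w) (s:=s) (p:=p) ((insert p s).erase q)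
    (List.range q ++ List.range' (q+1) (p-q)) ?_ ?_ ?_
  · rw [hs, eraseIdx_take hq (by omega), List.filterMap_append, List.range_eq_range',
      seg w q 0 (by omega), List.drop_zero, seg w (p-q) (q+1) (by omega)]
    rw [show p - q = (p - (q+1)) + 1 by omega, List.take_succ]
    rw [List.getElem?_drop, show q + 1 + (p - (q+1)) = p by omega, List.getElem?_eq_getElem hp,
      Option.toList_some, List.append_assoc, List.append_assoc, List.singleton_append,
      List.append_assoc]
  · rw [List.pairwise_append]
    refine ⟨List.pairwise_lt_range, sorted_lt_range'' _ _, ?_⟩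
    intro x hx y hy
    rw [List.mem_range] at hx
    rw [List.mem_range'_1] at hy
    omega
  · intro x hx
    rw [List.mem_append, List.mem_range, List.mem_range'_1] at hx
    omega
  · ext i
    simp only [Finset.mem_union, List.mem_toFinset, List.mem_append, List.mem_range,
      List.mem_range'_1, Finset.mem_filter, Finset.mem_erase, Finset.mem_insert]
    constructor
    · rintro ((h | h) | ⟨h, hpi⟩)
      · exact ⟨by omega, Or.inr (hlow i (by omega))⟩
      · rcases Nat.lt_or_ge i p with h' | h'
        · exact ⟨by omega, Or.inr (hlow i h')⟩
        · exact ⟨by omega, Or.inl (by omega)⟩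
      · exact ⟨by omega, Or.inr h⟩
    · rintro ⟨hne, rfl | hi⟩
      · exact Or.inl (Or.inr (by omega))
      · rcases lt_trichotomy i p with h | h | h
        · left
          rcases Nat.lt_or_ge i q with h' | h'
          · exact Or.inl h'
          · exact Or.inr (by omega)
        · exact absurd (h ▸ hi) hps
        · exact Or.inr ⟨hi, h⟩

theorem eraseIdx_rep {l : List Bool} {i : ℕ} (h1 : 1 ≤ i) (h : l[i]? = l[i-1]?) :
    l.eraseIdx i = l.eraseIdx (i-1) := by
  obtain ⟨j, rfl⟩ : ∃ j, i = j + 1 := ⟨i-1, by omega⟩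
  simp only [Nat.add_sub_cancel] at h ⊢
  by_cases hlen : j + 1 < l.length
  · rw [List.eraseIdx_eq_take_drop_succ, List.eraseIdx_eq_take_drop_succ]
    rw [List.take_succ, List.getElem?_eq_getElem (show j < l.length by omega), Option.toList_some]
    rw [show l.drop (j+1) = l[j+1] :: l.drop (j+2) from List.drop_eq_getElem_cons hlen]
    rw [List.append_assoc, List.singleton_append]
    have heq : l[j+1] = l[j] := by
      rw [List.getElem?_eq_getElem hlen, List.getElem?_eq_getElem (show j < l.length by omega)]
        at h
      exact Option.some.inj h
    rw [heq]
  · have h2 : l[j+1]? = none := List.getElem?_eq_none (by omega)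
    rw [h2] at h
    have h3 : l.length ≤ j := List.getElem?_eq_none_iff.mp h.symm
    rw [List.eraseIdx_of_length_le (by omega), List.eraseIdx_of_length_le (by omega)]

theorem exists_eraseIdx {u w : List Bool} (h : u <+ w) (hne : u ≠ w) :
    ∃ j < w.length, u <+ w.eraseIdx j := by
  induction h with
  | slnil => exact absurd rfl hne
  | @cons l₁ l₂ a hsub ih =>
    exact ⟨0, by simp, by simpa using hsub⟩
  | @cons_cons l₁ l₂ a hsub ih =>
    have hne' : l₁ ≠ l₂ := fun e => hne (by rw [e])
    obtain ⟨j, hj, hs⟩ := ih hne'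
    refine ⟨j+1, by simpa using hj, ?_⟩
    rw [List.eraseIdx_cons_succ]
    exact hs.cons_cons a

theorem to_leader {u w : Word} : ∀ j, j < w.length → u <+ w.eraseIdx j →
    ∃ q, q < w.length ∧ q ∉ RepSet w ∧ u <+ w.eraseIdx q := by
  intro j
  induction j using Nat.strong_induction_on with
  | _ j ih =>
    intro hj hjs
    by_cases hR : j ∈ RepSet w
    · have h1 : 1 ≤ j := (Finset.mem_Ico.mp (Finset.mem_filter.mp hR).1).1
      have heq : w[j]? = w[j-1]? := (Finset.mem_filter.mp hR).2
      exact ih (j-1) (by omega) (by omega) (by rw [← eraseIdx_rep h1 heq]; exact hjs)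
    · exact ⟨j, hj, hR, hjs⟩

def togg (s : Finset ℕ) (q : ℕ) : Finset ℕ := if q ∈ s then s.erase q else insert q s

theorem togg_togg (s : Finset ℕ) (q : ℕ) : togg (togg s q) q = s := by
  unfold togg
  by_cases h : q ∈ s
  · rw [if_pos h, if_neg (Finset.notMem_erase q s), Finset.insert_erase h]
  · rw [if_neg h, if_pos (Finset.mem_insert_self q s), Finset.erase_insert h]

theorem togg_ne (s : Finset ℕ) (q : ℕ) : togg s q ≠ s := by
  unfold togg
  by_cases h : q ∈ s
  · rw [if_pos h]; intro e; exact (Finset.notMem_erase q s) (e.symm ▸ h)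
  · rw [if_neg h]; intro e; exact h (e ▸ Finset.mem_insert_self q s)

theorem togg_sign (s : Finset ℕ) (q : ℕ) :
    (-1:ℤ)^(togg s q).card = -(-1:ℤ)^s.card := by
  unfold togg
  by_cases h : q ∈ s
  · rw [if_pos h, Finset.card_erase_of_mem h]
    have hc : s.card = (s.card - 1) + 1 :=
      (Nat.succ_pred_eq_of_pos (Finset.card_pos.mpr ⟨q, h⟩)).symm
    conv_rhs => rw [hc]
    rw [pow_succ]; ring
  · rw [if_neg h, Finset.card_insert_of_notMem h, pow_succ]; ring

open Classical in
noncomputable def Tg (u w : Word) (s : Finset ℕ) : Finset ℕ :=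
  (Finset.range w.length).filter (fun q => q ∉ RepSet w ∧ u <+ wrd w (togg s q))

theorem mem_Tg {u w : Word} {s : Finset ℕ} {q : ℕ} :
    q ∈ Tg u w s ↔ q < w.length ∧ q ∉ RepSet w ∧ u <+ wrd w (togg s q) := by
  unfold Tg
  rw [Finset.mem_filter, Finset.mem_range]

theorem tg_nonempty {u w : Word} {s : Finset ℕ} (hR : RepSet w ⊆ s)
    (hsub : s ⊆ Finset.range w.length) (hu : u <+ wrd w s) (huw : u <+ w) (hne : u ≠ w) :
    (Tg u w s).Nonempty := by
  by_cases hall : ∀ q ∈ Finset.range w.length, q ∈ s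
  · have hs : s = Finset.range w.length :=
      Finset.Subset.antisymm hsub (fun q hq => hall q hq)
    subst hs
    obtain ⟨j, hj, hjs⟩ := exists_eraseIdx huw hne
    obtain ⟨q, hq, hqR, hqs⟩ := to_leader j hj hjs
    refine ⟨q, mem_Tg.mpr ⟨hq, hqR, ?_⟩⟩
    have hqmem : q ∈ Finset.range w.length := Finset.mem_range.mpr hq
    unfold togg
    rw [if_pos hqmem]
    have htail : tailW w (Finset.range w.length) w.length = [] := by
      unfold tailW
      rw [Finset.filter_false_of_mem (fun i hi => by rw [Finset.mem_range] at hi; omega),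
        Finset.sort_empty]
      rfl
    rw [wrdD3 (le_refl w.length) (by simp) (fun i hi => Finset.mem_range.mpr hi) hq, htail,
      List.append_nil, List.take_length]
    exact hqs
  · push_neg at hall
    obtain ⟨q, hq, hqs⟩ := hall
    refine ⟨q, mem_Tg.mpr ⟨Finset.mem_range.mp hq, fun hr => hqs (hR hr), ?_⟩⟩
    unfold togg
    rw [if_neg hqs]
    exact hu.trans (wrd_mono (Finset.subset_insert q s))

theorem sublist_concat_ne {v P : List Bool} {d z : Bool} (h : v ++ [d] <+ P ++ [z])
    (hne : d ≠ z) : v ++ [d] <+ P := by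
  rw [List.sublist_append_iff] at h
  obtain ⟨l₁, l₂, heq, h₁, h₂⟩ := h
  rcases List.sublist_singleton.mp h₂ with rfl | rfl
  · rw [List.append_nil] at heq; exact heq ▸ h₁
  · exfalso
    have := congrArg List.getLast? heq
    rw [List.getLast?_concat, List.getLast?_concat] at this
    exact hne (Option.some.inj this)

theorem keyLemma {u P X : List Bool} {d : Bool} (hP : P ≠ [])
    (hlast : P.getLast hP ≠ d) (hu : u <+ P ++ X)
    (hdel : ∀ i < P.length, ¬ u <+ P.eraseIdx i ++ X) :
    ∀ i < P.length, ¬ u <+ P.eraseIdx i ++ d :: X := by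
  classical
  intro i hi hcon
  have hex : ∃ j, u.drop j <+ X := ⟨u.length, by simp⟩
  set k := Nat.find hex with hkdef
  have hk : u.drop k <+ X := Nat.find_spec hex
  have hkmin : ∀ j, u.drop j <+ X → k ≤ j := fun j hj => Nat.find_le hj
  have htake : u.take k <+ P := by
    rw [List.sublist_append_iff] at hu
    obtain ⟨l₁, l₂, heq, h₁, h₂⟩ := hu
    have hl₂ : l₂ = u.drop l₁.length := by rw [heq]; simp
    have hkle : k ≤ l₁.length := hkmin _ (hl₂ ▸ h₂)
    have ht : u.take k = l₁.take k := by
      rw [heq, List.take_append_of_le_length hkle]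
    rw [ht]
    exact (List.take_sublist _ _).trans h₁
  -- decompose the bad embedding
  rw [List.sublist_append_iff] at hcon
  obtain ⟨α, l₂, hueq, hα, hl₂⟩ := hcon
  rcases List.sublist_cons_iff.mp hl₂ with h2X | ⟨β, rfl, hβ⟩
  · exact hdel i hi (hueq ▸ List.Sublist.append hα h2X)
  · -- u = α ++ d :: β
    have hdropβ : u.drop (α.length + 1) = β := by
      rw [hueq, List.drop_append]
      simp
    have hk1 : k ≤ α.length + 1 := hkmin _ (hdropβ ▸ hβ)
    rcases Nat.lt_or_ge k (α.length + 1) with hlt | hge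
    · -- k ≤ |α| : contradiction with hdel i
      have hkα : k ≤ α.length := by omega
      have ht : u.take k = α.take k := by
        rw [hueq, List.take_append_of_le_length hkα]
      have : u <+ P.eraseIdx i ++ X := by
        conv_lhs => rw [← List.take_append_drop k u]
        exact List.Sublist.append (ht ▸ ((List.take_sublist _ _).trans hα)) hk
      exact hdel i hi this
    · -- k = |α| + 1
      have hkeq : k = α.length + 1 := le_antisymm hk1 hge
      have ht : u.take k = α ++ [d] := by
        rw [hueq, hkeq, List.take_append]
        simp
      have hαd : α ++ [d] <+ P := ht ▸ htake
      have hPd : α ++ [d] <+ P.dropLast := by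
        refine sublist_concat_ne ?_ (fun hdz => hlast hdz.symm)
        rw [List.dropLast_append_getLast hP] at *
        exact hαd
      have hlen : 0 < P.length := List.length_pos_iff.mpr hP
      have hdL : P.dropLast = P.eraseIdx (P.length - 1) :=
        List.dropLast_eq_eraseIdx (by omega)
      refine hdel (P.length - 1) (by omega) ?_
      rw [← hdL]
      conv_lhs => rw [← List.take_append_drop k u]
      exact List.Sublist.append (ht ▸ hPd) hk

theorem min_consistency {u w : Word} {s : Finset ℕ} (hR : RepSet w ⊆ s)
    (hsub : s ⊆ Finset.range w.length) (hu : u <+ wrd w s)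
    (hnem : (Tg u w s).Nonempty)
    (hnem' : (Tg u w (togg s ((Tg u w s).min' hnem))).Nonempty) :
    (Tg u w (togg s ((Tg u w s).min' hnem))).min' hnem' = (Tg u w s).min' hnem := by
  set p := (Tg u w s).min' hnem with hp
  have hpmem : p ∈ Tg u w s := Finset.min'_mem _ _
  obtain ⟨hpn, hpR, hup⟩ := mem_Tg.mp hpmem
  have hmin : ∀ r ∈ Tg u w s, p ≤ r := fun r hr => Finset.min'_le _ _ hr
  set s' := togg s p with hs'
  have hp' : p ∈ Tg u w s' := by
    rw [mem_Tg, hs', togg_togg]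
    exact ⟨hpn, hpR, hu⟩
  apply le_antisymm (Finset.min'_le _ p hp')
  apply Finset.le_min'
  intro q hq
  by_contra hqp
  push_neg at hqp
  obtain ⟨hqn, hqR, huq⟩ := mem_Tg.mp hq
  by_cases hps : p ∈ s
  · -- removal case: easy by monotonicity
    have hs'e : s' = s.erase p := by rw [hs']; unfold togg; rw [if_pos hps]
    have hqTg : q ∈ Tg u w s := by
      rw [mem_Tg]
      refine ⟨hqn, hqR, ?_⟩
      by_cases hqs : q ∈ s
      · have hq1 : q ∈ s' := by rw [hs'e]; exact Finset.mem_erase.mpr ⟨by omega, hqs⟩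
        have e1 : togg s' q = s'.erase q := by unfold togg; rw [if_pos hq1]
        have e2 : togg s q = s.erase q := by unfold togg; rw [if_pos hqs]
        rw [e1, hs'e] at huq
        rw [e2]
        exact huq.trans (wrd_mono (Finset.erase_subset_erase q (Finset.erase_subset p s)))
      · have hq1 : q ∉ s' := fun hh => hqs (Finset.erase_subset p s (hs'e ▸ hh))
        have e1 : togg s' q = insert q s' := by unfold togg; rw [if_neg hq1]
        have e2 : togg s q = insert q s := by unfold togg; rw [if_neg hqs]
        rw [e1, hs'e] at huq
        rw [e2]
        exact huq.trans (wrd_mono (Finset.insert_subset_insert q (Finset.erase_subset p s)))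
    have := hmin q hqTg
    omega
  · -- insertion case: the hard one
    have hs'e : s' = insert p s := by rw [hs']; unfold togg; rw [if_neg hps]
    have hlow : ∀ i, i < p → i ∈ s := by
      intro i hip
      by_cases hiR : i ∈ RepSet w
      · exact hR hiR
      by_contra his
      have hiTg : i ∈ Tg u w s := by
        rw [mem_Tg]
        refine ⟨by omega, hiR, ?_⟩
        have e1 : togg s i = insert i s := by unfold togg; rw [if_neg his]
        rw [e1]
        exact hu.trans (wrd_mono (Finset.subset_insert i s))
      have := hmin i hiTg
      omega
    by_cases hqs : q ∈ s
    · -- the key lemma case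
      have hq1 : q ∈ s' := by rw [hs'e]; exact Finset.mem_insert_of_mem hqs
      have e1 : togg s' q = s'.erase q := by unfold togg; rw [if_pos hq1]
      rw [e1, hs'e] at huq
      set P := w.take p with hP
      set X := tailW w s p with hX
      have hPlen : P.length = p := by rw [hP, List.length_take]; omega
      have hPne : P ≠ [] := by
        intro e
        rw [e] at hPlen
        simp at hPlen
        omega
      have hwp1 : p - 1 < p := by omega
      have hlast : P.getLast hPne ≠ w[p] := by
        have hne' : ¬ (w[p]? = w[p-1]?) := by
          intro e
          exact hpR (Finset.mem_filter.mpr ⟨Finset.mem_Ico.mpr ⟨by omega, hpn⟩, e⟩)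
        have h1 : P.getLast hPne = P[P.length - 1]'(by rw [hPlen]; omega) :=
          List.getLast_eq_getElem hPne
        have h2 : P[P.length - 1]'(by rw [hPlen]; omega) = w[p-1]'(by omega) := by
          have : P[P.length - 1]? = w[p-1]? := by
            rw [hPlen, hP, List.getElem?_take, if_pos hwp1]
          rw [List.getElem?_eq_getElem (by rw [hPlen]; omega),
            List.getElem?_eq_getElem (show p - 1 < w.length by omega)] at this
          exact Option.some.inj this
        intro e
        apply hne'
        rw [List.getElem?_eq_getElem hpn, List.getElem?_eq_getElem (show p-1 < w.length by omega)]
        rw [h1, h2] at e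
        rw [← e]
      have hu1 : u <+ P ++ X := by
        rw [hP, hX, ← wrdD1 (le_of_lt hpn) hps hlow]
        exact hu
      have hdel : ∀ i, i < p → ¬ u <+ P.eraseIdx i ++ X := by
        intro i
        induction i using Nat.strong_induction_on with
        | _ i ih =>
          intro hip hcon
          by_cases hiR : i ∈ RepSet w
          · have h1 : 1 ≤ i := (Finset.mem_Ico.mp (Finset.mem_filter.mp hiR).1).1
            have heqw : w[i]? = w[i-1]? := (Finset.mem_filter.mp hiR).2
            have heqP : P[i]? = P[i-1]? := by
              rw [hP, List.getElem?_take, if_pos hip, List.getElem?_take, if_pos (show i-1 < p by omega)]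
              exact heqw
            exact ih (i-1) (by omega) (by omega) (by rw [← eraseIdx_rep h1 heqP]; exact hcon)
          · have his : i ∈ s := hlow i hip
            have hiTg : i ∈ Tg u w s := by
              rw [mem_Tg]
              refine ⟨by omega, hiR, ?_⟩
              have e2 : togg s i = s.erase i := by unfold togg; rw [if_pos his]
              rw [e2, wrdD3 (le_of_lt hpn) hps hlow hip]
              exact hcon
            have := hmin i hiTg
            omega
      have hkey := keyLemma hPne hlast hu1 (fun i hi => hdel i (hPlen ▸ hi)) q
        (by rw [hPlen]; omega)
      apply hkey
      rw [← wrdD4 hpn hps hlow hqp]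
      exact huq
    · exact hqs (hlow q hqp)

/-- The alternating sum of normal-embedding counts over an interval of the
subword order vanishes: `∑_{u ≤ v ≤ w} (-1)^{|v|} (w choose v)_n = 0` whenever
`u < w`. -/
theorem alternating_sum_nCount (u w : Word) (h : u <+ w) (hne : u ≠ w) :
    ∑ v ∈ w.sublists.toFinset.filter (fun v => u <+ v),
      (-1 : ℤ) ^ v.length * (nCount v w : ℤ) = 0 := by
  classical
  rw [sum_reindex]
  set S := (Finset.range w.length).powerset.filter
      (fun s => RepSet w ⊆ s ∧ u <+ wrd w s) with hS
  have hmem : ∀ s ∈ S, RepSet w ⊆ s ∧ s ⊆ Finset.range w.length ∧ u <+ wrd w s := by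
    intro s hs
    rw [hS, Finset.mem_filter, Finset.mem_powerset] at hs
    exact ⟨hs.2.1, hs.1, hs.2.2⟩
  have hnem : ∀ s ∈ S, (Tg u w s).Nonempty := by
    intro s hs
    obtain ⟨h1, h2, h3⟩ := hmem s hs
    exact tg_nonempty h1 h2 h3 h hne
  refine Finset.sum_involution
    (fun s hs => togg s ((Tg u w s).min' (hnem s hs))) ?_ ?_ ?_ ?_
  · intro s hs
    rw [togg_sign]
    ring
  · intro s hs _
    exact togg_ne s _
  · -- membership
    intro s hs
    beta_reduce
    obtain ⟨h1, h2, h3⟩ := hmem s hs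
    have hpmem := Finset.min'_mem (Tg u w s) (hnem s hs)
    obtain ⟨hpn, hpR, hup⟩ := mem_Tg.mp hpmem
    set p := (Tg u w s).min' (hnem s hs)
    rw [hS, Finset.mem_filter, Finset.mem_powerset]
    refine ⟨?_, ?_, hup⟩
    · unfold togg
      by_cases hp : p ∈ s
      · rw [if_pos hp]
        exact (Finset.erase_subset p s).trans h2
      · rw [if_neg hp]
        exact Finset.insert_subset (Finset.mem_range.mpr hpn) h2
    · unfold togg
      by_cases hp : p ∈ s
      · rw [if_pos hp]
        intro x hx
        exact Finset.mem_erase.mpr ⟨fun e => hpR (e ▸ hx), h1 hx⟩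
      · rw [if_neg hp]
        exact h1.trans (Finset.subset_insert p s)
  · -- involution
    intro s hs
    beta_reduce
    obtain ⟨h1, h2, h3⟩ := hmem s hs
    rw [min_consistency h1 h2 h3 (hnem s hs), togg_togg]
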